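/- Let Π(z) = z + a z^m + O(z^{m+1}) be a holomorphic germ at 0 in ℂ with a ≠ 0 and m ≥ 2 (a parabolic germ tangent to the identity). Then for any point z in an attracting petal of Π, the iterates satisfy Π^n(z) → 0 as n → ∞. -/

import Mathlib

open Filter Metric Topology

private noncomputable def Fc (c : ℂ) (k : ℕ) (z : ℂ) : ℂ := -(c * z ^ k)⁻¹

private lemma Fc_norm (c : ℂ) (k : ℕ) (z : ℂ) : ‖Fc c k z‖ = (‖c‖ * ‖z‖ ^ k)⁻¹ := by
  rw [Fc, norm_neg, norm_inv, norm_mul, norm_pow]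

private lemma geom_bound (n : ℕ) (s : ℂ) (hs : ‖s‖ ≤ 1) :
    ‖(1 + s) ^ n - 1‖ ≤ n * 2 ^ n * ‖s‖ := by
  have h1 : ‖1 + s‖ ≤ 2 := by
    calc ‖1 + s‖ ≤ ‖(1:ℂ)‖ + ‖s‖ := norm_add_le _ _
    _ ≤ 2 := by rw [norm_one]; linarith
  have hg := geom_sum_mul (1 + s) n
  rw [← hg, norm_mul]
  have hsum : ‖∑ i ∈ Finset.range n, (1+s)^i‖ ≤ n * 2 ^ n := by
    calc ‖∑ i ∈ Finset.range n, (1+s)^i‖ ≤ ∑ i ∈ Finset.range n, ‖(1+s)^i‖ :=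
          norm_sum_le _ _
    _ ≤ ∑ _i ∈ Finset.range n, (2:ℝ)^n := by
        apply Finset.sum_le_sum; intro i hi
        rw [norm_pow]
        calc ‖1+s‖^i ≤ 2^i := pow_le_pow_left₀ (norm_nonneg _) h1 i
        _ ≤ 2^n := pow_le_pow_right₀ (by norm_num) (Finset.mem_range.mp hi).le
    _ = n * 2^n := by simp [Finset.sum_const]
  have h2 : ‖(1+s) - 1‖ = ‖s‖ := by norm_num
  rw [h2]
  exact mul_le_mul_of_nonneg_right hsum (norm_nonneg _)

private lemma key_bound (n : ℕ) : ∃ K : ℝ, 0 ≤ K ∧ ∀ s : ℂ, ‖s‖ ≤ 1 →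
    ‖(1 + s) ^ n * (1 - n * s) - 1‖ ≤ K * ‖s‖ ^ 2 := by
  induction n with
  | zero => exact ⟨0, le_refl 0, fun s hs => by simp⟩
  | succ n ih =>
    obtain ⟨K, hK0, hK⟩ := ih
    refine ⟨2*K + (n+1)*2^(n+1), by positivity, fun s hs => ?_⟩
    have h1 : ‖1 + s‖ ≤ 2 := by
      calc ‖1 + s‖ ≤ ‖(1:ℂ)‖ + ‖s‖ := norm_add_le _ _
      _ ≤ 2 := by rw [norm_one]; linarith
    have hid : (1+s)^(n+1) * (1 - (↑(n+1):ℕ)*s) - 1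
        = (1+s) * ((1+s)^n * (1 - n*s) - 1) - s * ((1+s)^(n+1) - 1) := by
      push_cast; ring
    rw [hid]
    calc ‖(1+s) * ((1+s)^n * (1 - n*s) - 1) - s * ((1+s)^(n+1) - 1)‖
        ≤ ‖(1+s) * ((1+s)^n * (1 - n*s) - 1)‖ + ‖s * ((1+s)^(n+1) - 1)‖ :=
          norm_sub_le _ _
      _ = ‖1+s‖ * ‖(1+s)^n * (1 - n*s) - 1‖ + ‖s‖ * ‖(1+s)^(n+1) - 1‖ := by
          rw [norm_mul, norm_mul]
      _ ≤ 2 * (K * ‖s‖^2) + ‖s‖ * ((n+1) * 2^(n+1) * ‖s‖) := by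
          gcongr
          · exact hK s hs
          · exact_mod_cast geom_bound (n+1) s hs
      _ = (2*K + (n+1)*2^(n+1)) * ‖s‖^2 := by ring

private lemma heq_aux (A b x : ℝ) (k : ℕ) (hb : 0 < b) (hx : 0 < x) :
    (A * x^(k+1)) / (b * x^k * (1/2)^k) = (A * 2^k / b) * x := by
  have h2 : ((1:ℝ)/2)^k = (2^k)⁻¹ := by rw [one_div, inv_pow]
  rw [pow_succ, h2]
  field_simp

private lemma fatou_alg (c z s : ℂ) (k : ℕ) (hc : c ≠ 0) (hz : z ≠ 0)
    (hs : (1 + s) ≠ 0) :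
    Fc c k (z * (1 + s)) - Fc c k z - 1
      = ((1 + s) ^ k * (1 - c * z ^ k) - 1) / (c * z ^ k * (1 + s) ^ k) := by
  have hzk : z ^ k ≠ 0 := pow_ne_zero _ hz
  have hsk : (1 + s) ^ k ≠ 0 := pow_ne_zero _ hs
  rw [Fc, Fc, mul_pow]
  field_simp
  ring

/-- The key step estimate: one application of `Pi` acts on the Fatou coordinate
as `u ↦ u + 1 + D` with `‖D‖ ≤ M' * ‖z‖`. -/
private lemma step_est (Pi : ℂ → ℂ) (a : ℂ) (k : ℕ) (C K : ℝ) (z : ℂ)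
    (hk1 : 1 ≤ k) (ha : a ≠ 0) (hCnn : 0 ≤ C) (hK0 : 0 ≤ K)
    (hK : ∀ s : ℂ, ‖s‖ ≤ 1 → ‖(1 + s) ^ k * (1 - k * s) - 1‖ ≤ K * ‖s‖ ^ 2)
    (hz0 : z ≠ 0) (hz1 : ‖z‖ ≤ 1) (hCz : C * ‖z‖ ≤ ‖a‖)
    (hsz : 2 * ‖a‖ * ‖z‖ ≤ 1/2)
    (hg : ‖Pi z - (z + a * z ^ (k+1))‖ ≤ C * ‖z‖ ^ (k+2)) :
    Pi z ≠ 0 ∧ ‖Fc ((k:ℂ)*a) k (Pi z) - Fc ((k:ℂ)*a) k z - 1‖ ≤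
      ((4*K*‖a‖^2 + k * 2^k * C) * 2^k / (k * ‖a‖)) * ‖z‖ := by
  have hanorm : (0:ℝ) < ‖a‖ := norm_pos_iff.mpr ha
  have hzn : 0 < ‖z‖ := norm_pos_iff.mpr hz0
  have hkR : (0:ℝ) < k := by exact_mod_cast hk1
  set c : ℂ := (k:ℂ) * a with hcdef
  have hc : c ≠ 0 := mul_ne_zero (Nat.cast_ne_zero.mpr (by omega)) ha
  have hcnorm : ‖c‖ = k * ‖a‖ := by rw [hcdef, norm_mul, Complex.norm_natCast]
  clear_value c
  set g : ℂ := Pi z - (z + a * z ^ (k+1)) with hgdef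
  set t : ℂ := g / z with htdef
  have ht : ‖t‖ ≤ C * ‖z‖ ^ (k+1) := by
    rw [htdef, norm_div, div_le_iff₀ hzn]
    calc ‖g‖ ≤ C * ‖z‖ ^ (k+2) := hg
    _ = C * ‖z‖ ^ (k+1) * ‖z‖ := by ring
  set s : ℂ := a * z ^ k + t with hsdef
  have hzkz : ‖z‖ ^ k ≤ ‖z‖ := by
    calc ‖z‖ ^ k ≤ ‖z‖ ^ 1 := pow_le_pow_of_le_one hzn.le hz1 hk1
    _ = ‖z‖ := pow_one _
  have hs2 : ‖s‖ ≤ 2 * ‖a‖ * ‖z‖ ^ k := by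
    calc ‖s‖ ≤ ‖a * z^k‖ + ‖t‖ := norm_add_le _ _
    _ ≤ ‖a‖ * ‖z‖^k + C * ‖z‖^(k+1) := by
        rw [norm_mul, norm_pow]; linarith
    _ = ‖a‖ * ‖z‖^k + (C * ‖z‖) * ‖z‖^k := by ring
    _ ≤ ‖a‖ * ‖z‖^k + ‖a‖ * ‖z‖^k := by
        nlinarith [pow_nonneg hzn.le k]
    _ = 2 * ‖a‖ * ‖z‖^k := by ring
  have hs12 : ‖s‖ ≤ 1/2 := by
    calc ‖s‖ ≤ 2 * ‖a‖ * ‖z‖ ^ k := hs2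
    _ ≤ 2 * ‖a‖ * ‖z‖ := by nlinarith
    _ ≤ 1/2 := hsz
  have hs1 : ‖s‖ ≤ 1 := by linarith
  clear_value g t s
  have h1s : (1:ℝ)/2 ≤ ‖1 + s‖ := by
    have h := norm_add_le (1 + s) (-s)
    simp only [add_neg_cancel_right, norm_one, norm_neg] at h
    linarith
  have h1s2 : ‖1 + s‖ ≤ 2 := by
    calc ‖1 + s‖ ≤ ‖(1:ℂ)‖ + ‖s‖ := norm_add_le _ _
    _ ≤ 2 := by rw [norm_one]; linarith
  have h1s0 : (1 + s) ≠ 0 := by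
    intro h; rw [h, norm_zero] at h1s; linarith
  have hfac : Pi z = z * (1 + s) := by
    have hzt : z * t = g := by rw [htdef]; field_simp
    have hPieq : Pi z = z + a * z^(k+1) + g := by rw [hgdef]; ring
    rw [hPieq, ← hzt, hsdef]; ring
  have hPiz0 : Pi z ≠ 0 := by
    rw [hfac]; exact mul_ne_zero hz0 h1s0
  refine ⟨hPiz0, ?_⟩
  have hden : c * z^k * (1+s)^k ≠ 0 :=
    mul_ne_zero (mul_ne_zero hc (pow_ne_zero _ hz0)) (pow_ne_zero _ h1s0)
  set N : ℂ := (1+s)^k * (1 - c * z^k) - 1 with hNdef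
  clear_value N
  have hD : Fc c k (Pi z) - Fc c k z - 1 = N / (c * z^k * (1+s)^k) := by
    rw [hNdef, hfac]
    exact fatou_alg c z s k hc hz0 h1s0
  have hcz : c * z^k = (k:ℂ) * s - (k:ℂ) * t := by
    rw [hsdef, hcdef]; ring
  have hNsplit : N = ((1+s)^k * (1 - (k:ℂ)*s) - 1) + (1+s)^k * ((k:ℂ)*t) := by
    rw [hNdef, hcz]; ring
  have hknC : ‖(k:ℂ)‖ = (k:ℝ) := by simp
  have hN : ‖N‖ ≤ (4*K*‖a‖^2 + k * 2^k * C) * ‖z‖ ^ (k+1) := by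
    have hb1 : ‖(1+s)^k * (1 - (k:ℂ)*s) - 1‖ ≤ K * ‖s‖^2 := hK s hs1
    have hb2 : ‖(1+s)^k * ((k:ℂ)*t)‖ ≤ 2^k * (k * (C * ‖z‖^(k+1))) := by
      rw [norm_mul, norm_mul, norm_pow, hknC]
      have h2k : ‖1+s‖^k ≤ 2^k := pow_le_pow_left₀ (norm_nonneg _) h1s2 k
      gcongr
    have hs2k : ‖s‖^2 ≤ 4 * ‖a‖^2 * ‖z‖^(2*k) := by
      have h2 : ‖z‖^(2*k) = (‖z‖^k)^2 := by rw [two_mul, pow_add, sq]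
      rw [h2]
      nlinarith [norm_nonneg s, pow_nonneg (norm_nonneg z) k, hs2]
    have hz2k : ‖z‖^(2*k) ≤ ‖z‖^(k+1) :=
      pow_le_pow_of_le_one hzn.le hz1 (by omega)
    calc ‖N‖ ≤ ‖(1+s)^k * (1 - (k:ℂ)*s) - 1‖ + ‖(1+s)^k * ((k:ℂ)*t)‖ := by
          rw [hNsplit]; exact norm_add_le _ _
    _ ≤ K * ‖s‖^2 + 2^k * (k * (C * ‖z‖^(k+1))) := by linarith
    _ ≤ K * (4 * ‖a‖^2 * ‖z‖^(2*k)) + 2^k * (k * (C * ‖z‖^(k+1))) :=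
          add_le_add_left (mul_le_mul_of_nonneg_left hs2k hK0) _
    _ ≤ K * (4 * ‖a‖^2 * ‖z‖^(k+1)) + 2^k * (k * (C * ‖z‖^(k+1))) := by gcongr
    _ = (4*K*‖a‖^2 + k * 2^k * C) * ‖z‖^(k+1) := by ring
  have hdenlb : k * ‖a‖ * ‖z‖^k * (1/2)^k ≤ ‖c * z^k * (1+s)^k‖ := by
    rw [norm_mul, norm_mul, norm_pow, norm_pow, hcnorm]
    have hpk : ((1:ℝ)/2)^k ≤ ‖1+s‖^k := pow_le_pow_left₀ (by norm_num) h1s k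
    have hzk : (0:ℝ) ≤ k * ‖a‖ * ‖z‖^k := by positivity
    calc k * ‖a‖ * ‖z‖^k * (1/2)^k = k * ‖a‖ * (‖z‖^k * (1/2)^k) := by ring
    _ ≤ k * ‖a‖ * (‖z‖^k * ‖1+s‖^k) := by gcongr
    _ = k * ‖a‖ * ‖z‖^k * ‖1+s‖^k := by ring
  have hd0 : (0:ℝ) < k * ‖a‖ * ‖z‖^k * (1/2)^k := by positivity
  rw [hD, norm_div]
  have hMnn : (0:ℝ) ≤ 4*K*‖a‖^2 + k * 2^k * C := by positivity
  have hdiv : ‖N‖ / ‖c * z^k * (1+s)^k‖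
      ≤ ((4*K*‖a‖^2 + k * 2^k * C) * ‖z‖^(k+1)) / (k * ‖a‖ * ‖z‖^k * (1/2)^k) :=
    div_le_div₀ (by positivity) hN hd0 hdenlb
  rw [heq_aux (4*K*‖a‖^2 + k * 2^k * C) (k * ‖a‖) ‖z‖ k (by positivity) hzn] at hdiv
  exact hdiv

/-- Leau–Fatou: for a parabolic germ `Pi(z) = z + a z^m + O(z^{m+1})` with `a ≠ 0`,
`m ≥ 2`, there is an attracting petal `P` (an open set accumulating at `0`,
invariant under `Pi`) on which all forward orbits converge to `0`. -/
theorem stmt0 (Pi : ℂ → ℂ) (a : ℂ) (m : ℕ) (r : ℝ) (hr : 0 < r)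
    (hPi : DifferentiableOn ℂ Pi (ball (0 : ℂ) r))
    (hPi0 : Pi 0 = 0) (ha : a ≠ 0) (hm : 2 ≤ m)
    (hasym : ∃ C : ℝ, ∀ z ∈ ball (0 : ℂ) r,
      ‖Pi z - (z + a * z ^ m)‖ ≤ C * ‖z‖ ^ (m + 1)) :
    ∃ P : Set ℂ, IsOpen P ∧ P ⊆ ball (0 : ℂ) r ∧ P.Nonempty ∧
      (0 : ℂ) ∈ closure P ∧ (0 : ℂ) ∉ P ∧ Set.MapsTo Pi P P ∧
      ∀ z ∈ P, Tendsto (fun n => Pi^[n] z) atTop (nhds 0) := by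
  obtain ⟨C0, hC0⟩ := hasym
  have hCnn : (0:ℝ) ≤ max C0 0 := le_max_right _ _
  have hC : ∀ z ∈ ball (0:ℂ) r, ‖Pi z - (z + a * z ^ m)‖ ≤ (max C0 0) * ‖z‖ ^ (m+1) := by
    intro z hz
    exact (hC0 z hz).trans (mul_le_mul_of_nonneg_right (le_max_left _ _) (by positivity))
  set C : ℝ := max C0 0 with hCdef
  clear_value C
  clear hC0 hCdef
  obtain ⟨k, rfl⟩ : ∃ k, m = k + 1 := ⟨m - 1, by omega⟩
  have hk1 : 1 ≤ k := by omega
  have hkR : (0:ℝ) < k := by exact_mod_cast hk1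
  have hanorm : (0:ℝ) < ‖a‖ := norm_pos_iff.mpr ha
  have hcnorm : ‖(k:ℂ) * a‖ = k * ‖a‖ := by rw [norm_mul, Complex.norm_natCast]
  have hc : (k:ℂ) * a ≠ 0 := mul_ne_zero (Nat.cast_ne_zero.mpr (by omega)) ha
  have hFnorm : ∀ z : ℂ, ‖Fc ((k:ℂ)*a) k z‖ = (k * ‖a‖ * ‖z‖ ^ k)⁻¹ := by
    intro z
    rw [Fc_norm, hcnorm, mul_assoc]
  obtain ⟨K, hK0, hK⟩ := key_bound k
  set M' : ℝ := (4*K*‖a‖^2 + k * 2^k * C) * 2^k / (k * ‖a‖) with hM'def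
  have hM'0 : 0 ≤ M' := by positivity
  set B : ℝ := M' + 2*‖a‖ + 1 with hBdef
  have hB1 : 1 ≤ B := by nlinarith
  have hB0 : 0 < B := by linarith
  set δ : ℝ := min (min 1 (r/2)) (min (‖a‖/(C+1)) (1/(2*B))) with hδdef
  have hδ0 : 0 < δ :=
    lt_min (lt_min one_pos (by linarith)) (lt_min (by positivity) (by positivity))
  have hδ1 : δ ≤ 1 := le_trans (min_le_left _ _) (min_le_left _ _)
  have hδr : δ ≤ r/2 := le_trans (min_le_left _ _) (min_le_right _ _)
  have hδa : δ ≤ ‖a‖/(C+1) := le_trans (min_le_right _ _) (min_le_left _ _)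
  have hδB : δ ≤ 1/(2*B) := le_trans (min_le_right _ _) (min_le_right _ _)
  have hδC : C * δ ≤ ‖a‖ := by
    have h1 : C * δ ≤ C * (‖a‖/(C+1)) := mul_le_mul_of_nonneg_left hδa hCnn
    have h2 : C * (‖a‖/(C+1)) ≤ ‖a‖ := by
      rw [mul_div_assoc', div_le_iff₀ (by linarith)]
      nlinarith
    linarith
  have hBδ : B * δ ≤ 1/2 := by
    calc B * δ ≤ B * (1/(2*B)) := mul_le_mul_of_nonneg_left hδB hB0.le
    _ = 1/2 := by field_simp
  clear_value δ B M'
  set R : ℝ := (k * ‖a‖ * δ ^ k)⁻¹ with hRdef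
  have hR0 : 0 < R := by positivity
  clear_value R
  set P : Set ℂ :=
    {z : ℂ | z ≠ 0 ∧ R < (Fc ((k:ℂ)*a) k z).re ∧
      |(Fc ((k:ℂ)*a) k z).im| < (Fc ((k:ℂ)*a) k z).re} with hPdef
  have hmemP : ∀ z : ℂ, z ∈ P ↔ z ≠ 0 ∧ R < (Fc ((k:ℂ)*a) k z).re ∧
      |(Fc ((k:ℂ)*a) k z).im| < (Fc ((k:ℂ)*a) k z).re := fun z => Iff.rfl
  clear_value P
  -- smallness of points of P
  have hsmall : ∀ z ∈ P, ‖z‖ < δ := by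
    intro z hz
    obtain ⟨hz0, hre, -⟩ := (hmemP z).mp hz
    have hzn : 0 < ‖z‖ := norm_pos_iff.mpr hz0
    have h1 : R < ‖Fc ((k:ℂ)*a) k z‖ := lt_of_lt_of_le hre (Complex.re_le_norm _)
    rw [hFnorm, hRdef] at h1
    have h2 : k * ‖a‖ * ‖z‖ ^ k < k * ‖a‖ * δ ^ k := by
      have := (inv_lt_inv₀ (by positivity) (by positivity)).mp h1
      linarith
    have h3 : ‖z‖ ^ k < δ ^ k :=
      lt_of_mul_lt_mul_left (by linarith) (by positivity : (0:ℝ) ≤ k * ‖a‖)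
    exact lt_of_pow_lt_pow_left₀ k hδ0.le h3
  have hPball : P ⊆ ball (0:ℂ) r := by
    intro z hz
    rw [mem_ball, dist_zero_right]
    have := hsmall z hz
    linarith
  -- the key step estimate
  have step : ∀ z ∈ P, Pi z ≠ 0 ∧ ‖Fc ((k:ℂ)*a) k (Pi z) - Fc ((k:ℂ)*a) k z - 1‖ ≤ 1/2 := by
    intro z hz
    obtain ⟨hz0, -, -⟩ := (hmemP z).mp hz
    have hzδ : ‖z‖ < δ := hsmall z hz
    have hzn : 0 < ‖z‖ := norm_pos_iff.mpr hz0
    have hz1 : ‖z‖ ≤ 1 := by linarith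
    have hCz : C * ‖z‖ ≤ ‖a‖ := by
      have := mul_le_mul_of_nonneg_left hzδ.le hCnn
      linarith
    have h2a : 2 * ‖a‖ ≤ B := by linarith
    have hsz : 2 * ‖a‖ * ‖z‖ ≤ 1/2 := by
      have t1 : 2 * ‖a‖ * ‖z‖ ≤ 2 * ‖a‖ * δ :=
        mul_le_mul_of_nonneg_left hzδ.le (by positivity)
      have t2 : 2 * ‖a‖ * δ ≤ B * δ := mul_le_mul_of_nonneg_right h2a hδ0.le
      linarith
    have hg : ‖Pi z - (z + a * z ^ (k+1))‖ ≤ C * ‖z‖ ^ (k+2) := hC z (hPball hz)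
    obtain ⟨h1, h2⟩ := step_est Pi a k C K z hk1 ha hCnn hK0 hK hz0 hz1 hCz hsz hg
    refine ⟨h1, h2.trans ?_⟩
    rw [← hM'def]
    have hMB : M' ≤ B := by linarith
    have t1 : M' * ‖z‖ ≤ M' * δ := mul_le_mul_of_nonneg_left hzδ.le hM'0
    have t2 : M' * δ ≤ B * δ := mul_le_mul_of_nonneg_right hMB hδ0.le
    linarith
  -- invariance
  have hmaps : Set.MapsTo Pi P P := by
    intro z hz
    obtain ⟨hPiz0, hDle⟩ := step z hz
    obtain ⟨hz0, hre, him⟩ := (hmemP z).mp hz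
    have hDre : |(Fc ((k:ℂ)*a) k (Pi z) - Fc ((k:ℂ)*a) k z - 1).re| ≤ 1/2 :=
      le_trans (Complex.abs_re_le_norm _) hDle
    have hDim : |(Fc ((k:ℂ)*a) k (Pi z) - Fc ((k:ℂ)*a) k z - 1).im| ≤ 1/2 :=
      le_trans (Complex.abs_im_le_norm _) hDle
    rw [Complex.sub_re, Complex.sub_re, Complex.one_re] at hDre
    rw [Complex.sub_im, Complex.sub_im, Complex.one_im] at hDim
    have h1 := abs_le.mp hDre
    have h2 := abs_le.mp hDim
    have h3 := abs_lt.mp him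
    refine (hmemP _).mpr ⟨hPiz0, by linarith [h1.1], ?_⟩
    rw [abs_lt]
    constructor <;> linarith [h2.1, h2.2, h1.1, h1.2, h3.1, h3.2]
  -- orbits increase the real part
  have orbit : ∀ z ∈ P, ∀ n : ℕ, Pi^[n] z ∈ P ∧
      (Fc ((k:ℂ)*a) k z).re + n * (1/2 : ℝ) ≤ (Fc ((k:ℂ)*a) k (Pi^[n] z)).re := by
    intro z hz n
    induction n with
    | zero => simpa using hz
    | succ n ih =>
      obtain ⟨hmem, hlb⟩ := ih
      rw [Function.iterate_succ_apply']
      refine ⟨hmaps hmem, ?_⟩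
      obtain ⟨-, hDle⟩ := step _ hmem
      have hDre : |(Fc ((k:ℂ)*a) k (Pi (Pi^[n] z)) - Fc ((k:ℂ)*a) k (Pi^[n] z) - 1).re| ≤ 1/2 :=
        le_trans (Complex.abs_re_le_norm _) hDle
      rw [Complex.sub_re, Complex.sub_re, Complex.one_re] at hDre
      have h1 := abs_le.mp hDre
      push_cast
      linarith [h1.1]
  -- construction of points in P
  have hpt : ∀ u : ℝ, R < u → ∃ z ∈ P, ‖z‖ ^ k = (k * ‖a‖ * u)⁻¹ := by
    intro u hu
    have hu0 : 0 < u := lt_trans hR0 hu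
    have huC : (u:ℂ) ≠ 0 := by exact_mod_cast hu0.ne'
    obtain ⟨z, hzw⟩ := Complex.isAlgClosed.exists_pow_nat_eq (-(((k:ℂ)*a) * u)⁻¹)
      (by omega : 0 < k)
    have hz0 : z ≠ 0 := by
      intro h
      rw [h, zero_pow (by omega : k ≠ 0), eq_comm, neg_eq_zero, inv_eq_zero] at hzw
      exact (mul_ne_zero hc huC) hzw
    have hFz : Fc ((k:ℂ)*a) k z = (u:ℂ) := by
      rw [Fc, hzw]
      field_simp
      exact div_self (Nat.cast_ne_zero.mpr (by omega))
    refine ⟨z, (hmemP z).mpr ⟨hz0, ?_, ?_⟩, ?_⟩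
    · rw [hFz, Complex.ofReal_re]; exact hu
    · rw [hFz, Complex.ofReal_im, Complex.ofReal_re, abs_zero]; exact hu0
    · rw [← norm_pow, hzw, norm_neg, norm_inv, norm_mul, hcnorm, Complex.norm_real,
        Real.norm_eq_abs, abs_of_pos hu0, mul_assoc]
  -- putting it together
  refine ⟨P, ?_, hPball, ?_, ?_, ?_, hmaps, ?_⟩
  · -- open
    have hFcont : ContinuousOn (Fc ((k:ℂ)*a) k) ({(0:ℂ)}ᶜ) := by
      apply ContinuousOn.neg
      apply ContinuousOn.inv₀
      · exact continuousOn_const.mul ((continuous_pow k).continuousOn)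
      · intro z hz
        exact mul_ne_zero hc (pow_ne_zero _ (by simpa using hz))
    have hH : IsOpen {u : ℂ | R < u.re ∧ |u.im| < u.re} :=
      IsOpen.inter (isOpen_lt continuous_const Complex.continuous_re)
        (isOpen_lt Complex.continuous_im.abs Complex.continuous_re)
    have hPeq : P = {(0:ℂ)}ᶜ ∩ (Fc ((k:ℂ)*a) k) ⁻¹' {u : ℂ | R < u.re ∧ |u.im| < u.re} := by
      ext z
      simp only [hPdef, Set.mem_setOf_eq, Set.mem_inter_iff, Set.mem_compl_iff,
        Set.mem_singleton_iff, Set.mem_preimage]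
    rw [hPeq]
    exact hFcont.isOpen_inter_preimage isOpen_compl_singleton hH
  · -- nonempty
    obtain ⟨z, hz, -⟩ := hpt (R+1) (by linarith)
    exact ⟨z, hz⟩
  · -- closure
    rw [Metric.mem_closure_iff]
    intro ε hε
    obtain ⟨z, hzP, hzn⟩ := hpt (max (R+1) ((k * ‖a‖ * ε^k)⁻¹ + 1))
      (lt_of_lt_of_le (by linarith) (le_max_left _ _))
    refine ⟨z, hzP, ?_⟩
    rw [dist_comm, dist_zero_right]
    set u : ℝ := max (R+1) ((k * ‖a‖ * ε^k)⁻¹ + 1) with hudef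
    have hu2 : (k * ‖a‖ * ε^k)⁻¹ < u := lt_of_lt_of_le (by linarith) (le_max_right _ _)
    have hu0 : 0 < u := lt_trans hR0 (lt_of_lt_of_le (by linarith) (le_max_left _ _))
    have hεk : (0:ℝ) < k * ‖a‖ * ε^k := by positivity
    have h1 : (k * ‖a‖ * u)⁻¹ < ε ^ k := by
      rw [← inv_inv (ε^k)]
      apply inv_strictAnti₀ (by positivity)
      calc (ε^k)⁻¹ = (k * ‖a‖ * ε^k)⁻¹ * (k * ‖a‖) := by
            field_simp
      _ < u * (k * ‖a‖) := mul_lt_mul_of_pos_right hu2 (by positivity)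
      _ = k * ‖a‖ * u := by ring
    have h2 : ‖z‖ ^ k < ε ^ k := by rw [hzn]; exact h1
    exact lt_of_pow_lt_pow_left₀ k hε.le h2
  · -- 0 ∉ P
    intro h
    exact ((hmemP 0).mp h).1 rfl
  · -- convergence
    intro z hz
    rw [Metric.tendsto_atTop]
    intro ε hε
    obtain ⟨N, hN⟩ := exists_nat_gt (2 * ((k * ‖a‖ * ε^k)⁻¹ - (Fc ((k:ℂ)*a) k z).re) + 1)
    refine ⟨N, fun n hn => ?_⟩
    obtain ⟨hmem, hlb⟩ := orbit z hz n
    have hzn0 : Pi^[n] z ≠ 0 := ((hmemP _).mp hmem).1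
    have hznn : 0 < ‖Pi^[n] z‖ := norm_pos_iff.mpr hzn0
    rw [dist_zero_right]
    have hnN : (N:ℝ) ≤ n := by exact_mod_cast hn
    have hTlt : (k * ‖a‖ * ε^k)⁻¹ < (Fc ((k:ℂ)*a) k (Pi^[n] z)).re := by linarith
    have h1 : (k * ‖a‖ * ε^k)⁻¹ < ‖Fc ((k:ℂ)*a) k (Pi^[n] z)‖ :=
      lt_of_lt_of_le hTlt (Complex.re_le_norm _)
    rw [hFnorm] at h1
    have hp1 : (0:ℝ) < k * ‖a‖ * ‖Pi^[n] z‖^k :=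
      mul_pos (mul_pos hkR hanorm) (pow_pos hznn k)
    have hp2 : (0:ℝ) < k * ‖a‖ * ε^k := by positivity
    have h2 : k * ‖a‖ * ‖Pi^[n] z‖^k < k * ‖a‖ * ε^k := by
      have := (inv_lt_inv₀ hp2 hp1).mp h1
      linarith
    have h3 : ‖Pi^[n] z‖ ^ k < ε ^ k :=
      lt_of_mul_lt_mul_left h2 (by positivity : (0:ℝ) ≤ k * ‖a‖)
    exact lt_of_pow_lt_pow_left₀ k hε.le h3
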